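/- Let ε, E, ω, α, λ be real numbers with λ ≠ 0, and let Φ be a real-analytic function on a neighborhood of 0 satisfying the generalized Calogero–Yukawa reduced equation Φ''(x) + (2ε/x)·Φ'(x) + [2E − ω²x² − (2√2·α/x)·exp(−√2·x/λ)]·Φ(x) = 0 for all x in some interval (0, δ) with δ > 0. Writing C_k = Φ^{(k)}(0)/k! for the Taylor coefficients of Φ at 0 (with the convention C_j = 0 for j < 0), the coefficients satisfy the recurrence relation k·(2ε + k − 1)·C_k = 2α·Σ_{m=0}^{k−1} ((−1)^m · 2^{(m+1)/2} / (m!·λ^m)) · C_{k−m−1} + ω²·C_{k−4} − 2E·C_{k−2} for every integer k ≥ 4. -/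

import Mathlib

set_option maxHeartbeats 800000

/-- Uniqueness of power series coefficients. -/
lemma cy_coeff_eq_zero {q : ℕ → ℝ} {r : ℝ} (hr : 0 < r)
    (h : ∀ x ∈ Set.Ioo (0 : ℝ) r, HasSum (fun n => q n * x ^ n) 0) :
    ∀ n, q n = 0 := by
  intro n
  induction n using Nat.strong_induction_on with
  | _ n IH =>
  set x₀ : ℝ := r / 2 with hx₀def
  have hx₀pos : 0 < x₀ := by positivity
  have hx₀r : x₀ < r := by rw [hx₀def]; linarith
  have hsum₀ := (h x₀ ⟨hx₀pos, hx₀r⟩).summable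
  have htend : Filter.Tendsto (fun m => |q m| * x₀ ^ m) Filter.atTop (nhds 0) := by
    have h1 := hsum₀.tendsto_atTop_zero.abs
    simp only [abs_zero] at h1
    refine h1.congr fun m => ?_
    rw [abs_mul, abs_pow, abs_of_pos hx₀pos]
  obtain ⟨M, hM⟩ := htend.bddAbove_range
  have hMb : ∀ m, |q m| * x₀ ^ m ≤ M := fun m => hM ⟨m, rfl⟩
  have hM0 : 0 ≤ M := le_trans (by positivity) (hMb 0)
  -- main estimate
  have key : ∀ x ∈ Set.Ioo (0 : ℝ) (x₀ / 2), |q n| ≤ (2 * M / x₀ ^ (n + 1)) * x := by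
    rintro x ⟨hx1, hx2⟩
    have hxr : x < r := by
      have : x₀ / 2 < r := by rw [hx₀def]; linarith
      linarith
    have hs := h x ⟨hx1, hxr⟩
    set t : ℝ := x / x₀ with htdef
    have ht0 : 0 < t := by positivity
    have ht2 : t ≤ 1 / 2 := by
      rw [htdef, div_le_div_iff₀ hx₀pos two_pos]; linarith
    have ht1 : t < 1 := by linarith
    have hfin : ∑ i ∈ Finset.range (n + 1), q i * x ^ i = q n * x ^ n := by
      rw [Finset.sum_eq_single n]
      · intro b hb hbn
        have : b < n := lt_of_le_of_ne (Nat.lt_succ_iff.mp (Finset.mem_range.mp hb)) hbn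
        rw [IH b this, zero_mul]
      · intro hn; exact absurd (Finset.self_mem_range_succ n) hn
    have htail := Summable.sum_add_tsum_nat_add (f := fun m => q m * x ^ m) (n + 1) hs.summable
    rw [hs.tsum_eq, hfin] at htail
    set T : ℝ := ∑' m, q (m + (n + 1)) * x ^ (m + (n + 1)) with hTdef
    have hqx : q n * x ^ n = - T := by linarith
    have hsumtail : Summable fun m => q (m + (n + 1)) * x ^ (m + (n + 1)) :=
      (summable_nat_add_iff (n + 1)).mpr hs.summable
    have hbound : ∀ m, |q (m + (n + 1)) * x ^ (m + (n + 1))| ≤ M * t ^ (n + 1) * t ^ m := by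
      intro m
      have hxt : x = x₀ * t := by rw [htdef]; field_simp [hx₀pos.ne']
      have heq : |q (m + (n + 1)) * x ^ (m + (n + 1))|
          = (|q (m + (n + 1))| * x₀ ^ (m + (n + 1))) * t ^ (m + (n + 1)) := by
        rw [abs_mul, abs_pow, abs_of_pos hx1, hxt, mul_pow]
        ring
      rw [heq]
      calc (|q (m + (n + 1))| * x₀ ^ (m + (n + 1))) * t ^ (m + (n + 1))
          ≤ M * t ^ (m + (n + 1)) :=
            mul_le_mul_of_nonneg_right (hMb _) (by positivity)
        _ = M * t ^ (n + 1) * t ^ m := by rw [pow_add]; ring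
    have hgeo : Summable fun m : ℕ => M * t ^ (n + 1) * t ^ m :=
      (summable_geometric_of_lt_one ht0.le ht1).mul_left _
    have habs : |q n| * x ^ n ≤ ∑' m : ℕ, M * t ^ (n + 1) * t ^ m := by
      have hsn : Summable (fun m => ‖q (m + (n + 1)) * x ^ (m + (n + 1))‖) := by
        simpa only [Real.norm_eq_abs] using hsumtail.abs
      have h2 := norm_tsum_le_tsum_norm hsn
      simp only [Real.norm_eq_abs] at h2
      have h3 : ∑' m, |q (m + (n + 1)) * x ^ (m + (n + 1))|
          ≤ ∑' m : ℕ, M * t ^ (n + 1) * t ^ m :=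
        Summable.tsum_le_tsum hbound hsumtail.abs hgeo
      have h1 : |q n * x ^ n| ≤ ∑' m : ℕ, M * t ^ (n + 1) * t ^ m := by
        rw [hqx, abs_neg, hTdef]
        exact le_trans h2 h3
      rwa [abs_mul, abs_pow, abs_of_pos hx1] at h1
    have hgeosum : ∑' m : ℕ, M * t ^ (n + 1) * t ^ m = M * t ^ (n + 1) * (1 - t)⁻¹ := by
      rw [tsum_mul_left, tsum_geometric_of_lt_one ht0.le ht1]
    have hinv : (1 - t)⁻¹ ≤ 2 := by
      rw [inv_le_comm₀ (by linarith) two_pos] at *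
      · linarith
    have hfinal : |q n| * x ^ n ≤ 2 * M * t ^ (n + 1) := by
      rw [hgeosum] at habs
      calc |q n| * x ^ n ≤ M * t ^ (n + 1) * (1 - t)⁻¹ := habs
        _ ≤ M * t ^ (n + 1) * 2 := by
            apply mul_le_mul_of_nonneg_left hinv (by positivity)
        _ = 2 * M * t ^ (n + 1) := by ring
    -- divide by x ^ n
    have hxn : (0:ℝ) < x ^ n := pow_pos hx1 n
    rw [← mul_le_mul_iff_left₀ hxn]
    calc |q n| * x ^ n ≤ 2 * M * t ^ (n + 1) := hfinal
      _ = (2 * M / x₀ ^ (n + 1)) * x * x ^ n := by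
          rw [htdef, div_pow, pow_succ]
          field_simp
  -- conclude q n = 0
  have ht : Filter.Tendsto (fun x : ℝ => (2 * M / x₀ ^ (n + 1)) * x)
      (nhdsWithin 0 (Set.Ioi 0)) (nhds 0) := by
    have h1 : Filter.Tendsto (fun x : ℝ => (2 * M / x₀ ^ (n + 1)) * x)
        (nhds 0) (nhds ((2 * M / x₀ ^ (n + 1)) * 0)) :=
      (continuous_const.mul continuous_id).tendsto 0
    rw [mul_zero] at h1
    exact h1.mono_left nhdsWithin_le_nhds
  have hev : ∀ᶠ x in nhdsWithin (0:ℝ) (Set.Ioi 0),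
      |q n| ≤ (2 * M / x₀ ^ (n + 1)) * x := by
    filter_upwards [Ioo_mem_nhdsGT_of_mem (Set.left_mem_Ico.mpr (by positivity : (0:ℝ) < x₀ / 2))]
      with x hx using key x hx
  have habs0 : |q n| ≤ 0 := ge_of_tendsto ht hev
  exact abs_eq_zero.mp (le_antisymm habs0 (abs_nonneg _))

open scoped ENNReal

/-- Recurrence relation satisfied by the Taylor coefficients `C k = Φ⁽ᵏ⁾(0)/k!` of an
analytic solution of the generalized Calogero–Yukawa reduced equation, for `k ≥ 4`:
`k(2ε+k−1)·C_k = 2α·Σ_{m=0}^{k−1} ((−1)^m 2^{(m+1)/2}/(m! λ^m))·C_{k−m−1} + ω²·C_{k−4} − 2E·C_{k−2}`. -/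
theorem calogero_yukawa_recurrence
    (ε E ω α lam : ℝ) (hlam : lam ≠ 0)
    (Φ : ℝ → ℝ) (hA : AnalyticAt ℝ Φ 0)
    (δ : ℝ) (hδ : 0 < δ)
    (hODE : ∀ x ∈ Set.Ioo (0 : ℝ) δ,
      deriv (deriv Φ) x + (2 * ε / x) * deriv Φ x +
        (2 * E - ω ^ 2 * x ^ 2
          - (2 * Real.sqrt 2 * α / x) * Real.exp (-Real.sqrt 2 * x / lam)) * Φ x = 0)
    (C : ℕ → ℝ) (hC : ∀ k, C k = iteratedDeriv k Φ 0 / (Nat.factorial k : ℝ)) :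
    ∀ k : ℕ, 4 ≤ k →
      (k : ℝ) * (2 * ε + (k : ℝ) - 1) * C k
        = 2 * α * ∑ m ∈ Finset.range k,
            ((-1 : ℝ) ^ m * (Real.sqrt 2 * (Real.sqrt 2) ^ m)
              / ((Nat.factorial m : ℝ) * lam ^ m)) * C (k - m - 1)
          + ω ^ 2 * C (k - 4) - 2 * E * C (k - 2) := by
  intro k hk
  obtain ⟨p, rp, hp⟩ := id hA
  have hdA : AnalyticAt ℝ (deriv Φ) 0 := by
    have h1 : AnalyticAt ℝ (fderiv ℝ Φ) 0 := hA.fderiv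
    have h2 : AnalyticAt ℝ (fun y => (ContinuousLinearMap.apply ℝ ℝ (1 : ℝ)) (fderiv ℝ Φ y)) 0 :=
      ((ContinuousLinearMap.apply ℝ ℝ (1 : ℝ)).analyticAt _).comp h1
    exact h2.congr (by filter_upwards with x using fderiv_apply_one_eq_deriv)
  obtain ⟨p₁, hp1at⟩ := hdA
  obtain ⟨r1, hp1⟩ := hp1at
  obtain ⟨ρp, hρp0, hρp⟩ := ENNReal.lt_iff_exists_nnreal_btwn.mp hp.r_pos
  obtain ⟨ρ1, hρ10, hρ1⟩ := ENNReal.lt_iff_exists_nnreal_btwn.mp hp1.r_pos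
  have hρp0' : (0:ℝ) < ρp := by exact_mod_cast hρp0
  have hρ10' : (0:ℝ) < ρ1 := by exact_mod_cast hρ10
  set c : ℕ → ℝ := fun n => p.coeff n with hcdef
  set d : ℕ → ℝ := fun n => p₁.coeff n with hddef
  set a : ℕ → ℝ := fun m => (-Real.sqrt 2 / lam) ^ m / (Nat.factorial m : ℝ) with hadef
  set R : ℝ := min δ (min (ρp:ℝ) (ρ1:ℝ)) with hRdef
  have hR0 : 0 < R := lt_min hδ (lt_min hρp0' hρ10')
  have hmemp : ∀ x : ℝ, x ∈ Set.Ioo 0 R → x ∈ Metric.eball (0:ℝ) rp := by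
    rintro x ⟨hx0, hxR⟩
    rw [mem_emetric_ball_zero_iff]
    refine lt_trans ?_ hρp
    rw [enorm_eq_nnnorm, ENNReal.coe_lt_coe, ← NNReal.coe_lt_coe, coe_nnnorm, Real.norm_eq_abs, abs_of_pos hx0]
    have : R ≤ (ρp:ℝ) := le_trans (min_le_right _ _) (min_le_left _ _)
    linarith
  have hmem1 : ∀ x : ℝ, x ∈ Set.Ioo 0 R → x ∈ Metric.eball (0:ℝ) r1 := by
    rintro x ⟨hx0, hxR⟩
    rw [mem_emetric_ball_zero_iff]
    refine lt_trans ?_ hρ1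
    rw [enorm_eq_nnnorm, ENNReal.coe_lt_coe, ← NNReal.coe_lt_coe, coe_nnnorm, Real.norm_eq_abs, abs_of_pos hx0]
    have : R ≤ (ρ1:ℝ) := le_trans (min_le_right _ _) (min_le_right _ _)
    linarith
  -- Taylor coefficients of Φ agree with the series coefficients
  have hCc : ∀ j, C j = c j := by
    intro j
    rw [hC j, hcdef]
    have h1 : iteratedDeriv j Φ 0 = (Nat.factorial j : ℝ) * p.coeff j := by
      rw [iteratedDeriv_eq_iteratedFDeriv, ← hp.factorial_smul 1 j,
        p.apply_eq_pow_smul_coeff, one_pow, one_smul, nsmul_eq_mul]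
    rw [h1]
    field_simp
  -- Fundamental HasSum expansions on (0, R)
  have hΦx : ∀ x ∈ Set.Ioo (0:ℝ) R, HasSum (fun n => c n * x ^ n) (Φ x) := by
    intro x hx
    have h1 := hp.hasSum (hmemp x hx)
    rw [zero_add] at h1
    have h2 : (fun n => c n * x ^ n) = (fun n => p n fun _ => x) := by
      funext n
      rw [p.apply_eq_pow_smul_coeff, smul_eq_mul, mul_comm]
    rw [h2]
    exact h1
  have hdΦx : ∀ x ∈ Set.Ioo (0:ℝ) R, HasSum (fun n => d n * x ^ n) (deriv Φ x) := by
    intro x hx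
    have h1 := hp1.hasSum (hmem1 x hx)
    rw [zero_add] at h1
    have h2 : (fun n => d n * x ^ n) = (fun n => p₁ n fun _ => x) := by
      funext n
      rw [p₁.apply_eq_pow_smul_coeff, smul_eq_mul, mul_comm]
    rw [h2]
    exact h1
  have hxΦ' : ∀ x ∈ Set.Ioo (0:ℝ) R,
      HasSum (fun (n : ℕ) => ((n:ℝ)+1) * c (n+1) * x ^ (n+1)) (x * deriv Φ x) := by
    intro x hx
    have h0 := hp.fderiv.hasSum (hmemp x hx)
    have h1 := h0.mapL (ContinuousLinearMap.apply ℝ ℝ x)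
    have h2 : (fun (n : ℕ) => ((n:ℝ)+1) * c (n+1) * x ^ (n+1))
        = (fun n => (ContinuousLinearMap.apply ℝ ℝ x) (p.derivSeries n fun _ => x)) := by
      funext n
      simp only [ContinuousLinearMap.apply_apply]
      rw [p.derivSeries_apply_diag, p.apply_eq_pow_smul_coeff]
      push_cast
      rw [nsmul_eq_mul, smul_eq_mul]
      push_cast
      ring
    have h3 : (ContinuousLinearMap.apply ℝ ℝ x) (fderiv ℝ Φ (0 + x)) = x * deriv Φ x := by
      simp only [ContinuousLinearMap.apply_apply, zero_add]
      conv_lhs => rw [show x = x • (1:ℝ) by simp]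
      rw [map_smul]
      simp [fderiv_apply_one_eq_deriv, smul_eq_mul]
    rw [h2, ← h3]
    exact h1
  have hxΦ'' : ∀ x ∈ Set.Ioo (0:ℝ) R,
      HasSum (fun (n : ℕ) => ((n:ℝ)+1) * d (n+1) * x ^ (n+1)) (x * deriv (deriv Φ) x) := by
    intro x hx
    have h0 := hp1.fderiv.hasSum (hmem1 x hx)
    have h1 := h0.mapL (ContinuousLinearMap.apply ℝ ℝ x)
    have h2 : (fun (n : ℕ) => ((n:ℝ)+1) * d (n+1) * x ^ (n+1))
        = (fun n => (ContinuousLinearMap.apply ℝ ℝ x) (p₁.derivSeries n fun _ => x)) := by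
      funext n
      simp only [ContinuousLinearMap.apply_apply]
      rw [p₁.derivSeries_apply_diag, p₁.apply_eq_pow_smul_coeff]
      push_cast
      rw [nsmul_eq_mul, smul_eq_mul]
      push_cast
      ring
    have h3 : (ContinuousLinearMap.apply ℝ ℝ x) (fderiv ℝ (deriv Φ) (0 + x))
        = x * deriv (deriv Φ) x := by
      simp only [ContinuousLinearMap.apply_apply, zero_add]
      conv_lhs => rw [show x = x • (1:ℝ) by simp]
      rw [map_smul]
      simp [fderiv_apply_one_eq_deriv, smul_eq_mul]
    rw [h2, ← h3]
    exact h1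
  have hΦ' : ∀ x ∈ Set.Ioo (0:ℝ) R,
      HasSum (fun (n : ℕ) => ((n:ℝ)+1) * c (n+1) * x ^ n) (deriv Φ x) := by
    rintro x hx
    have hx0 : x ≠ 0 := ne_of_gt hx.1
    refine (hasSum_mul_left_iff hx0).mp ?_
    have h2 : (fun (n : ℕ) => x * (((n:ℝ)+1) * c (n+1) * x ^ n))
        = (fun (n : ℕ) => ((n:ℝ)+1) * c (n+1) * x ^ (n+1)) := by
      funext n; ring
    rw [h2]
    exact hxΦ' x hx
  have hdc : ∀ n, d n = ((n:ℝ)+1) * c (n+1) := by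
    have h0 : ∀ x ∈ Set.Ioo (0:ℝ) R,
        HasSum (fun (n : ℕ) => (d n - ((n:ℝ)+1) * c (n+1)) * x ^ n) 0 := by
      intro x hx
      have h1 := (hdΦx x hx).sub (hΦ' x hx)
      rw [sub_self] at h1
      refine h1.congr_fun fun n => by ring
    intro n
    have := cy_coeff_eq_zero hR0 h0 n
    linarith [this]
  have hexp : ∀ x : ℝ, HasSum (fun m => a m * x ^ m) (Real.exp (-Real.sqrt 2 * x / lam)) := by
    intro x
    have h1 : HasSum (fun m => (-Real.sqrt 2 * x / lam) ^ m / (Nat.factorial m : ℝ))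
        (Real.exp (-Real.sqrt 2 * x / lam)) := by
      rw [Real.exp_eq_exp_ℝ]
      exact NormedSpace.expSeries_div_hasSum_exp _
    refine h1.congr_fun fun m => ?_
    rw [hadef]
    rw [show -Real.sqrt 2 * x / lam = (-Real.sqrt 2 / lam) * x by ring, mul_pow]
    ring
  have hcs : ∀ x ∈ Set.Ioo (0:ℝ) R, Summable (fun n => ‖c n * x ^ n‖) := by
    intro x hx
    have h1 : Summable (fun n => ‖p n fun _ => x‖) :=
      p.summable_norm_apply (Metric.eball_subset_eball hp.r_le (hmemp x hx))
    refine h1.congr fun n => ?_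
    rw [p.apply_eq_pow_smul_coeff, smul_eq_mul, mul_comm]
  have has : ∀ x : ℝ, Summable (fun m => ‖a m * x ^ m‖) := by
    intro x
    have h1 : Summable (fun m => |(-Real.sqrt 2 / lam) * x| ^ m / (Nat.factorial m : ℝ)) :=
      Real.summable_pow_div_factorial _
    refine Summable.congr h1 fun m => ?_
    simp only [hadef, Real.norm_eq_abs, abs_mul, abs_div, abs_pow, Nat.abs_cast, mul_pow]
    ring
  have hprod : ∀ x ∈ Set.Ioo (0:ℝ) R,
      HasSum (fun n => (∑ m ∈ Finset.range (n+1), a m * c (n-m)) * x ^ n)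
        (Real.exp (-Real.sqrt 2 * x / lam) * Φ x) := by
    intro x hx
    have hf := has x
    have hg := hcs x hx
    have htsum := tsum_mul_tsum_eq_tsum_sum_range_of_summable_norm hf hg
    have hsummable : Summable (fun n => ∑ m ∈ Finset.range (n+1),
        (a m * x ^ m) * (c (n-m) * x ^ (n-m))) :=
      (summable_norm_sum_mul_range_of_summable_norm hf hg).of_norm
    have h1 : HasSum (fun n => ∑ m ∈ Finset.range (n+1),
        (a m * x ^ m) * (c (n-m) * x ^ (n-m)))
        (Real.exp (-Real.sqrt 2 * x / lam) * Φ x) := by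
      have h2 := hsummable.hasSum
      rw [← htsum, (hexp x).tsum_eq, (hΦx x hx).tsum_eq] at h2
      exact h2
    refine h1.congr_fun fun n => ?_
    rw [Finset.sum_mul]
    refine Finset.sum_congr rfl fun m hm => ?_
    have hmn : m ≤ n := Nat.lt_succ_iff.mp (Finset.mem_range.mp hm)
    rw [show (a m * x ^ m) * (c (n-m) * x ^ (n-m)) = a m * c (n-m) * (x ^ m * x ^ (n-m)) by ring,
      ← pow_add, Nat.add_sub_cancel' hmn]
  -- the combined coefficient sequence
  set Q : ℕ → ℝ := fun n =>
    (n:ℝ) * d n + 2*ε*((n:ℝ)+1)*c (n+1) + (if n = 0 then 0 else 2*E*c (n-1))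
    + (if n < 3 then 0 else -(ω^2) * c (n-3))
    + (-(2*Real.sqrt 2*α) * ∑ m ∈ Finset.range (n+1), a m * c (n-m)) with hQdef
  have hQsum : ∀ x ∈ Set.Ioo (0:ℝ) R, HasSum (fun n => Q n * x ^ n) 0 := by
    intro x hx
    have hx0 : x ≠ 0 := ne_of_gt hx.1
    -- piece 1 : x * Φ''
    have H1 : HasSum (fun (n:ℕ) => ((n:ℝ) * d n) * x ^ n) (x * deriv (deriv Φ) x) := by
      have h1 := hxΦ'' x hx
      have h3 := (hasSum_nat_add_iff (f := fun (n:ℕ) => ((n:ℝ) * d n) * x ^ n) 1).mp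
        (h1.congr_fun fun n => by push_cast; ring)
      simpa using h3
    -- piece 2 : 2ε Φ'
    have H2 : HasSum (fun (n:ℕ) => (2*ε*((n:ℝ)+1)*c (n+1)) * x ^ n) (2*ε * deriv Φ x) := by
      have h1 := (hΦ' x hx).mul_left (2*ε)
      refine h1.congr_fun fun n => by ring
    -- piece 3 : 2 E x Φ
    have H3 : HasSum (fun (n:ℕ) => (if n = 0 then 0 else 2*E*c (n-1)) * x ^ n)
        ((2*E*x) * Φ x) := by
      have h1 := (hΦx x hx).mul_left (2*E*x)
      have h3 := (hasSum_nat_add_iff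
        (f := fun n => (if n = 0 then 0 else 2*E*c (n-1)) * x ^ n) 1).mp
        (h1.congr_fun fun n => by
          simp only [Nat.succ_ne_zero, if_false, Nat.add_sub_cancel]
          ring)
      simpa using h3
    -- piece 4 : -ω² x³ Φ
    have H4 : HasSum (fun (n:ℕ) => (if n < 3 then 0 else -(ω^2) * c (n-3)) * x ^ n)
        ((-(ω^2) * x^3) * Φ x) := by
      have h1 := (hΦx x hx).mul_left (-(ω^2) * x^3)
      have h3 := (hasSum_nat_add_iff
        (f := fun n => (if n < 3 then 0 else -(ω^2) * c (n-3)) * x ^ n) 3).mp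
        (h1.congr_fun fun n => by
          have hn : ¬ (n + 3 < 3) := by omega
          simp only [hn, if_false, Nat.add_sub_cancel]
          ring)
      have h4 : ∑ i ∈ Finset.range 3, (if i < 3 then (0:ℝ) else -(ω^2) * c (i-3)) * x ^ i = 0 := by
        simp [Finset.sum_range_succ]
      rw [h4, add_zero] at h3
      exact h3
    -- piece 5 : -2√2 α exp(-√2 x/λ) Φ
    have H5 : HasSum (fun (n:ℕ) =>
        ((-(2*Real.sqrt 2*α) * ∑ m ∈ Finset.range (n+1), a m * c (n-m))) * x ^ n)
        (-(2*Real.sqrt 2*α) * (Real.exp (-Real.sqrt 2 * x / lam) * Φ x)) := by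
      have h1 := (hprod x hx).mul_left (-(2*Real.sqrt 2*α))
      refine h1.congr_fun fun n => by ring
    -- combine all pieces
    have Htot := (((H1.add H2).add H3).add H4).add H5
    have hterm : (fun (n:ℕ) =>
        (((((n:ℝ) * d n) * x ^ n + (2*ε*((n:ℝ)+1)*c (n+1)) * x ^ n)
          + (if n = 0 then 0 else 2*E*c (n-1)) * x ^ n)
          + (if n < 3 then 0 else -(ω^2) * c (n-3)) * x ^ n)
          + ((-(2*Real.sqrt 2*α) * ∑ m ∈ Finset.range (n+1), a m * c (n-m))) * x ^ n)
        = fun n => Q n * x ^ n := by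
      funext n
      rw [hQdef]
      ring
    rw [hterm] at Htot
    -- the total sum is zero by the ODE
    have hODEx := hODE x ⟨hx.1, lt_of_lt_of_le hx.2 (min_le_left _ _)⟩
    have htotzero : x * deriv (deriv Φ) x + 2*ε * deriv Φ x + (2*E*x) * Φ x
        + (-(ω^2) * x^3) * Φ x
        + (-(2*Real.sqrt 2*α) * (Real.exp (-Real.sqrt 2 * x / lam) * Φ x)) = 0 := by
      have h1 := congrArg (fun y => x * y) hODEx
      simp only [mul_zero] at h1
      rw [← h1]
      field_simp
      ring
    rw [htotzero] at Htot
    exact Htot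
  have hQ0 : ∀ n, Q n = 0 := cy_coeff_eq_zero hR0 hQsum
  -- conclude
  obtain ⟨n, rfl⟩ : ∃ n, k = n + 1 := ⟨k - 1, by omega⟩
  have hn0 : n ≠ 0 := by omega
  have hn3 : ¬ (n < 3) := by omega
  have hQn := hQ0 n
  rw [hQdef] at hQn
  simp only [if_neg hn0, if_neg hn3] at hQn
  rw [hdc n] at hQn
  have hS : ∑ m ∈ Finset.range (n+1),
      ((-1:ℝ)^m * (Real.sqrt 2 * Real.sqrt 2 ^ m) / ((Nat.factorial m : ℝ) * lam ^ m))
        * C (n+1-m-1)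
      = Real.sqrt 2 * ∑ m ∈ Finset.range (n+1), a m * c (n-m) := by
    rw [Finset.mul_sum]
    refine Finset.sum_congr rfl fun m hm => ?_
    rw [show n+1-m-1 = n-m from by omega, hCc]
    simp only [hadef]
    rw [div_pow, neg_pow]
    ring
  rw [show n+1-4 = n-3 from by omega, show n+1-2 = n-1 from by omega, hS,
    hCc (n+1), hCc (n-3), hCc (n-1)]
  push_cast at hQn ⊢
  linear_combination hQn
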